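/- arXiv:math/0610485 — 2 statements merged into one kernel-verified Lean document; each statement's English description precedes it below -/
import Mathlib

section
/- For every f in L²(E,μ;ℝ), the series Σ_n ⟪f, ξ_n⟫_{L²(μ)} · g_n converges in L²(Ω,ℙ); its sum is denoted ν(f) (the white noise integral of f). -/
open MeasureTheory ProbabilityTheory Filter

open Real
open scoped NNReal ENNReal

lemma wn_gaussian_integral_eq (φ : ℝ → ℝ) :
    ∫ x, φ x ∂(gaussianReal 0 1) = ∫ x, gaussianPDFReal 0 1 x * φ x := by
  rw [gaussianReal_of_var_ne_zero _ one_ne_zero]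
  have h : gaussianPDF 0 1 = fun x => ((gaussianPDFReal 0 1 x).toNNReal : ℝ≥0∞) := rfl
  rw [h, integral_withDensity_eq_integral_smul
    (measurable_gaussianPDFReal 0 1).real_toNNReal]
  refine integral_congr_ae (ae_of_all _ fun x => ?_)
  simp [NNReal.smul_def, Real.coe_toNNReal _ (gaussianPDFReal_nonneg 0 1 x)]

lemma wn_integrable_gaussian (φ : ℝ → ℝ) (hφ : Measurable φ)
    (h : Integrable (fun x => gaussianPDFReal 0 1 x * φ x)) :
    Integrable φ (gaussianReal 0 1) := by
  rw [gaussianReal_of_var_ne_zero _ one_ne_zero]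
  have hpdf : gaussianPDF 0 1 = fun x => ((gaussianPDFReal 0 1 x).toNNReal : ℝ≥0∞) := rfl
  rw [hpdf, integrable_withDensity_iff_integrable_smul
    (measurable_gaussianPDFReal 0 1).real_toNNReal]
  refine h.congr (ae_of_all _ fun x => ?_)
  simp [NNReal.smul_def, Real.coe_toNNReal _ (gaussianPDFReal_nonneg 0 1 x)]

lemma wn_pdf_eq (x : ℝ) :
    gaussianPDFReal 0 1 x = (√(2 * π))⁻¹ * rexp (-(1/2) * x ^ 2) := by
  simp only [gaussianPDFReal, NNReal.coe_one, mul_one, sub_zero]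
  ring_nf

lemma wn_pdf_even (x : ℝ) : gaussianPDFReal 0 1 (-x) = gaussianPDFReal 0 1 x := by
  simp [wn_pdf_eq]

lemma wn_integrable_pdf_sq :
    Integrable (fun x : ℝ => gaussianPDFReal 0 1 x * x ^ 2) := by
  have h : Integrable (fun x : ℝ => x ^ (((2:ℕ)):ℝ) * rexp (-(1/2) * x ^ 2)) :=
    integrable_rpow_mul_exp_neg_mul_sq (by norm_num) (by norm_num)
  have h2 : Integrable (fun x : ℝ => x ^ (2:ℕ) * rexp (-(1/2) * x ^ 2)) := by
    refine h.congr (ae_of_all _ fun x => ?_)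
    simp [Real.rpow_natCast]
  have := h2.const_mul (√(2 * π))⁻¹
  refine this.congr (ae_of_all _ fun x => ?_)
  simp only [wn_pdf_eq]; ring

lemma wn_integrable_pdf_id :
    Integrable (fun x : ℝ => gaussianPDFReal 0 1 x * x) := by
  have h : Integrable (fun x : ℝ => x * rexp (-(1/2) * x ^ 2)) :=
    integrable_mul_exp_neg_mul_sq (by norm_num)
  have := h.const_mul (√(2 * π))⁻¹
  refine this.congr (ae_of_all _ fun x => ?_)
  simp only [wn_pdf_eq]; ring

lemma wn_mean_zero' : ∫ x : ℝ, gaussianPDFReal 0 1 x * x = 0 := by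
  have h := integral_neg_eq_self (fun x : ℝ => gaussianPDFReal 0 1 x * x) volume
  have h2 : ∫ x : ℝ, gaussianPDFReal 0 1 (-x) * (-x) = - ∫ x : ℝ, gaussianPDFReal 0 1 x * x := by
    rw [← integral_neg]
    exact integral_congr_ae (ae_of_all _ fun x => by simp only [wn_pdf_even]; ring)
  rw [h2] at h
  linarith

lemma wn_integrable_sq : Integrable (fun x : ℝ => x ^ 2) (gaussianReal 0 1) :=
  wn_integrable_gaussian _ (by fun_prop) wn_integrable_pdf_sq

lemma wn_integrable_id : Integrable (fun x : ℝ => x) (gaussianReal 0 1) :=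
  wn_integrable_gaussian _ (by fun_prop) wn_integrable_pdf_id

lemma wn_mean_zero : ∫ x : ℝ, x ∂(gaussianReal 0 1) = 0 := by
  rw [wn_gaussian_integral_eq]; exact wn_mean_zero'

lemma wn_var_pos : 0 < ∫ x : ℝ, x ^ 2 ∂(gaussianReal 0 1) := by
  rw [integral_pos_iff_support_of_nonneg (fun x => sq_nonneg x) wn_integrable_sq]
  have hsupp : Function.support (fun x : ℝ => x ^ 2) = {(0:ℝ)}ᶜ := by
    ext x; simp [Function.support, pow_eq_zero_iff]
  rw [hsupp]
  have h0 : (gaussianReal 0 1) {(0:ℝ)} = 0 :=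
    gaussianReal_absolutelyContinuous 0 one_ne_zero (measure_singleton 0)
  rw [measure_compl (MeasurableSet.singleton (0:ℝ)) (measure_ne_top _ _), h0]
  simp

/-- For every `f` in `L²(E,μ;ℝ)`, the series
`Σ_n ⟪f, ξ n⟫_{L²(μ)} • g n` converges in `L²(Ω,P)`. -/
theorem white_noise_series_converges_in_L2
    {E : Type*} [MeasurableSpace E] (μ : Measure E) [IsFiniteMeasure μ]
    {Ω : Type*} [MeasurableSpace Ω] (P : Measure Ω) [IsProbabilityMeasure P]
    (ξ : HilbertBasis ℕ ℝ (Lp ℝ 2 μ))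
    (g : ℕ → Ω → ℝ) (hg_meas : ∀ n, Measurable (g n))
    (hg_indep : iIndepFun g P)
    (hg_law : ∀ n, Measure.map (g n) P = gaussianReal 0 1)
    (f : Lp ℝ 2 μ) :
    ∃ S : Ω → ℝ, MemLp S 2 P ∧
      Tendsto
        (fun N => eLpNorm
          (fun ω => (∑ n ∈ Finset.range N, (inner ℝ f (ξ n) : ℝ) * g n ω) - S ω) 2 P)
        atTop (nhds 0) := by
  classical
  set γ := gaussianReal 0 1 with hγ
  set c : ℕ → ℝ := fun n => (inner ℝ f (ξ n) : ℝ) with hc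
  set C : ℝ := ∫ x : ℝ, x ^ 2 ∂γ with hCdef
  have hC : 0 < C := wn_var_pos
  have hsC : √C ≠ 0 := by positivity
  -- Memℒp of the g n
  have hmemγ : MemLp (fun x : ℝ => x) 2 γ :=
    (memLp_two_iff_integrable_sq measurable_id.aestronglyMeasurable).2 wn_integrable_sq
  have hmem : ∀ n, MemLp (g n) 2 P := by
    intro n
    have h : MemLp (fun x : ℝ => x) 2 (Measure.map (g n) P) := by rw [hg_law n]; exact hmemγ
    exact (memLp_map_measure_iff h.aestronglyMeasurable (hg_meas n).aemeasurable).1 h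
  -- integrals against the law
  have hlaw_int : ∀ (φ : ℝ → ℝ), AEStronglyMeasurable φ γ →
      ∀ n, ∫ ω, φ (g n ω) ∂P = ∫ x, φ x ∂γ := by
    intro φ hφ n
    rw [← hg_law n, integral_map (hg_meas n).aemeasurable]
    rw [hg_law n]; exact hφ
  have hmean : ∀ n, ∫ ω, g n ω ∂P = 0 := fun n => by
    rw [hlaw_int (fun x => x) aestronglyMeasurable_id n]; exact wn_mean_zero
  have hsqint : ∀ n, ∫ ω, (g n ω) ^ 2 ∂P = C := fun n =>
    hlaw_int (fun x => x ^ 2) (by fun_prop) n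
  -- L² elements
  set v : ℕ → Lp ℝ 2 P := fun n => (hmem n).toLp (g n) with hv
  have hv_inner : ∀ n m, (inner ℝ (v n) (v m) : ℝ) = ∫ ω, g n ω * g m ω ∂P := by
    intro n m
    rw [MeasureTheory.L2.inner_def]
    refine integral_congr_ae ?_
    filter_upwards [(hmem n).coeFn_toLp, (hmem m).coeFn_toLp] with ω h1 h2
    simp [h1, h2, RCLike.inner_apply]
    rw [mul_comm]; exact congrArg₂ (· * ·) h1 h2
  have hv_ortho : ∀ n m, n ≠ m → (inner ℝ (v n) (v m) : ℝ) = 0 := by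
    intro n m hnm
    rw [hv_inner]
    have hind : IndepFun (g n) (g m) P := hg_indep.indepFun hnm
    have := hind.integral_mul_eq_mul_integral (hg_meas n).aestronglyMeasurable (hg_meas m).aestronglyMeasurable
    rw [show (fun ω => g n ω * g m ω) = g n * g m from rfl, this, hmean n, hmean m, mul_zero]
  have hv_self : ∀ n, (inner ℝ (v n) (v n) : ℝ) = C := by
    intro n
    rw [hv_inner]
    rw [← hsqint n]
    exact integral_congr_ae (ae_of_all _ fun ω => (sq (g n ω)).symm)
  -- orthonormal rescaled family
  set u : ℕ → Lp ℝ 2 P := fun n => (√C)⁻¹ • v n with hu_def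
  have hu : Orthonormal ℝ u := by
    rw [orthonormal_iff_ite]
    intro i j
    rw [hu_def]
    simp only [real_inner_smul_left, real_inner_smul_right]
    by_cases hij : i = j
    · subst hij
      rw [hv_self i, if_pos rfl]
      rw [← Real.mul_self_sqrt hC.le]
      field_simp
      rw [Real.sqrt_sq (Real.sqrt_nonneg _)]
    · rw [hv_ortho i j hij, if_neg hij, mul_zero, mul_zero]
  -- summability
  have hcsum : Summable fun n => ‖√C * c n‖ ^ 2 := by
    have hb := ξ.orthonormal.inner_products_summable (x := f)
    have hb2 : Summable fun n => C * c n ^ 2 := by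
      refine (hb.mul_left C).congr fun n => ?_
      congr 1
      rw [hc]
      rw [real_inner_comm, Real.norm_eq_abs, sq_abs]
    refine hb2.congr fun n => ?_
    rw [Real.norm_eq_abs, sq_abs, mul_pow, Real.sq_sqrt hC.le]
  have hs2 : Summable fun n => (√C * c n) • u n := by
    have h := (hu.orthogonalFamily.summable_iff_norm_sq_summable
      (fun n => √C * c n)).2 hcsum
    exact h.congr fun n => LinearIsometry.toSpanSingleton_apply _ _
  have hs3 : Summable fun n => c n • v n := by
    refine hs2.congr fun n => ?_
    rw [hu_def, smul_smul]
    congr 1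
    field_simp
  set L : Lp ℝ 2 P := ∑' n, c n • v n with hL
  have htend : Tendsto (fun N => ∑ n ∈ Finset.range N, c n • v n) atTop (nhds L) :=
    hs3.hasSum.tendsto_sum_nat
  refine ⟨L, Lp.memLp L, ?_⟩
  -- identification of partial sums
  have hcoe : ∀ s : Finset ℕ,
      (↑(∑ n ∈ s, c n • v n) : Ω → ℝ) =ᵐ[P] fun ω => ∑ n ∈ s, c n * g n ω := by
    intro s
    induction s using Finset.induction with
    | empty => simp only [Finset.sum_empty]; exact Lp.coeFn_zero ℝ 2 P
    | @insert a s ha ih =>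
      filter_upwards [Lp.coeFn_add (c a • v a) (∑ n ∈ s, c n • v n),
        Lp.coeFn_smul (c a) (v a), (hmem a).coeFn_toLp, ih] with ω h1 h2 h3 h4
      rw [Finset.sum_insert ha, Finset.sum_insert ha, h1, Pi.add_apply, h2, Pi.smul_apply,
        h3, h4, smul_eq_mul]
  have hnorm : Tendsto (fun N => ‖(∑ n ∈ Finset.range N, c n • v n) - L‖) atTop (nhds 0) :=
    tendsto_iff_norm_sub_tendsto_zero.mp htend
  have hfin := (ENNReal.continuous_ofReal.tendsto 0).comp hnorm
  rw [ENNReal.ofReal_zero] at hfin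
  refine hfin.congr fun N => ?_
  rw [Function.comp_apply, Lp.norm_def, ENNReal.ofReal_toReal (Lp.eLpNorm_ne_top _)]
  refine (eLpNorm_congr_ae ?_).symm
  filter_upwards [Lp.coeFn_sub (∑ n ∈ Finset.range N, c n • v n) L, hcoe (Finset.range N)]
    with ω h1 h2
  rw [← h2, ← Pi.sub_apply, ← h1]
end

section
/- For every f in L²(E,μ;ℝ), the random variable ν(f) is a centered Gaussian random variable with variance ‖f‖²_{L²(μ)}; in particular, for every measurable set A ⊆ E, ν(1_A) is a centered Gaussian random variable with variance μ(A). -/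
open MeasureTheory ProbabilityTheory Filter Real

lemma gaussianPDFReal_symm (m : ℝ) (w : NNReal) (x : ℝ) :
    gaussianPDFReal m w x = gaussianPDFReal x w m := by
  unfold gaussianPDFReal
  rw [show (x - m)^2 = (m - x)^2 by ring]

lemma gaussian_conv_pdf_key {v w : NNReal} (hv : v ≠ 0) (hw : w ≠ 0) (y : ℝ) :
    ∫ x, gaussianPDFReal 0 v x * gaussianPDFReal x w y = gaussianPDFReal 0 (v + w) y := by
  have ha : (0:ℝ) < (v:ℝ) := NNReal.coe_pos.mpr hv.bot_lt
  have hb : (0:ℝ) < (w:ℝ) := NNReal.coe_pos.mpr hw.bot_lt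
  set a : ℝ := (v:ℝ) with ha'
  set b : ℝ := (w:ℝ) with hb'
  have hab : (0:ℝ) < a + b := by linarith
  have hπ : (0:ℝ) < π := pi_pos
  set k : ℝ := (a+b)/(2*a*b) with hk'
  have hk : (0:ℝ) < k := by positivity
  set msh : ℝ := a*y/(a+b) with hm'
  have hexp : ∀ x : ℝ, rexp (-(x-0)^2/(2*a)) * rexp (-(y-x)^2/(2*b))
      = rexp (-(y^2)/(2*(a+b))) * rexp (-k * (x - msh)^2) := by
    intro x
    rw [← Real.exp_add, ← Real.exp_add]
    congr 1
    rw [hk', hm']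
    field_simp
    ring
  set C : ℝ := (√(2*π*a))⁻¹ * (√(2*π*b))⁻¹ * rexp (-(y^2)/(2*(a+b))) with hC'
  have hpt : ∀ x : ℝ, gaussianPDFReal 0 v x * gaussianPDFReal x w y
      = C * rexp (-k * (x - msh)^2) := by
    intro x
    unfold gaussianPDFReal
    calc (√(2*π*a))⁻¹ * rexp (-(x-0)^2/(2*a)) * ((√(2*π*b))⁻¹ * rexp (-(y-x)^2/(2*b)))
        = ((√(2*π*a))⁻¹ * (√(2*π*b))⁻¹) * (rexp (-(x-0)^2/(2*a)) * rexp (-(y-x)^2/(2*b))) := by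
          ring
      _ = ((√(2*π*a))⁻¹ * (√(2*π*b))⁻¹) * (rexp (-(y^2)/(2*(a+b))) * rexp (-k * (x - msh)^2)) := by
          rw [hexp x]
      _ = C * rexp (-k * (x - msh)^2) := by rw [hC']; ring
  have hsq : C * √(π/k) = (√(2*π*(a+b)))⁻¹ * rexp (-(y^2)/(2*(a+b))) := by
    rw [hC']
    have : (√(2*π*a))⁻¹ * (√(2*π*b))⁻¹ * √(π/k) = (√(2*π*(a+b)))⁻¹ := by
      rw [← Real.sqrt_inv, ← Real.sqrt_inv, ← Real.sqrt_inv,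
        ← Real.sqrt_mul (by positivity), ← Real.sqrt_mul (by positivity)]
      congr 1
      rw [hk']
      field_simp
    calc (√(2*π*a))⁻¹ * (√(2*π*b))⁻¹ * rexp (-(y^2)/(2*(a+b))) * √(π/k)
        = ((√(2*π*a))⁻¹ * (√(2*π*b))⁻¹ * √(π/k)) * rexp (-(y^2)/(2*(a+b))) := by ring
      _ = _ := by rw [this]
  calc ∫ x, gaussianPDFReal 0 v x * gaussianPDFReal x w y
      = ∫ x, C * rexp (-k * (x - msh)^2) := by simp_rw [hpt]
    _ = C * ∫ x, rexp (-k * (x - msh)^2) := by rw [MeasureTheory.integral_const_mul]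
    _ = C * ∫ x, rexp (-k * x^2) := by
        rw [integral_sub_right_eq_self (fun x => rexp (-k * x^2)) msh]
    _ = C * √(π/k) := by rw [integral_gaussian]
    _ = gaussianPDFReal 0 (v+w) y := by
        rw [hsq]
        unfold gaussianPDFReal
        push_cast
        rw [sub_zero]

lemma gaussianReal_conv_gaussianReal (v w : NNReal) :
    (gaussianReal 0 v).conv (gaussianReal 0 w) = gaussianReal 0 (v + w) := by
  rcases eq_or_ne v 0 with rfl | hv
  · rw [gaussianReal_zero_var, zero_add, Measure.conv, Measure.dirac_prod,
      Measure.map_map (by fun_prop) (by fun_prop)]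
    simp [Function.comp_def]
  rcases eq_or_ne w 0 with rfl | hw
  · rw [gaussianReal_zero_var, add_zero, Measure.conv, Measure.prod_dirac,
      Measure.map_map (by fun_prop) (by fun_prop)]
    simp [Function.comp_def]
  have hvw : v + w ≠ 0 := by
    intro h
    rw [add_eq_zero] at h
    exact hv h.1
  have hjoint : Measurable (Function.uncurry fun x y => gaussianPDF x w y) := by
    unfold Function.uncurry gaussianPDF gaussianPDFReal
    fun_prop
  have hinner : ∀ y : ℝ, (∫⁻ x, gaussianPDF 0 v x * gaussianPDF x w y) = gaussianPDF 0 (v+w) y := by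
    intro y
    have hbd : ∀ x : ℝ, ‖gaussianPDFReal x w y‖ ≤ (√(2*π*(w:ℝ)))⁻¹ := by
      intro x
      rw [Real.norm_eq_abs, abs_of_nonneg (gaussianPDFReal_nonneg _ _ _)]
      unfold gaussianPDFReal
      calc (√(2*π*(w:ℝ)))⁻¹ * rexp (-(y-x)^2/(2*(w:ℝ)))
          ≤ (√(2*π*(w:ℝ)))⁻¹ * 1 := by
            gcongr
            exact Real.exp_le_one_iff.mpr
              (div_nonpos_of_nonpos_of_nonneg (neg_nonpos.mpr (sq_nonneg _)) (by positivity))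
        _ = _ := mul_one _
    have hmeas2 : Measurable fun x => gaussianPDFReal x w y := by
      simp_rw [fun x => gaussianPDFReal_symm x w y]
      exact measurable_gaussianPDFReal y w
    have hint : Integrable (fun x => gaussianPDFReal 0 v x * gaussianPDFReal x w y) volume := by
      have he : (fun x => gaussianPDFReal 0 v x * gaussianPDFReal x w y)
          = (fun x => gaussianPDFReal x w y * gaussianPDFReal 0 v x) := by funext x; ring
      rw [he]
      exact (integrable_gaussianPDFReal 0 v).bdd_mul hmeas2.aestronglyMeasurable
        (ae_of_all _ hbd)
    unfold gaussianPDF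
    simp_rw [← ENNReal.ofReal_mul (gaussianPDFReal_nonneg 0 v _)]
    rw [← ofReal_integral_eq_lintegral_ofReal hint
      (ae_of_all _ fun x => mul_nonneg (gaussianPDFReal_nonneg _ _ _) (gaussianPDFReal_nonneg _ _ _)),
      gaussian_conv_pdf_key hv hw y]
  ext s hs
  have hmeas_unc : AEMeasurable (Function.uncurry fun x y =>
      gaussianPDF 0 v x * gaussianPDF x w y) (volume.prod (volume.restrict s)) :=
    (((measurable_gaussianPDF 0 v).comp measurable_fst).mul hjoint).aemeasurable
  have hg : Measurable fun x => ∫⁻ y in s, gaussianPDF x w y :=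
    Measurable.lintegral_prod_right hjoint
  have hmapx : ∀ x : ℝ, gaussianReal 0 w (Prod.mk x ⁻¹' ((fun p : ℝ × ℝ => p.1 + p.2) ⁻¹' s))
      = ∫⁻ y in s, gaussianPDF x w y := by
    intro x
    have : (Prod.mk x ⁻¹' ((fun p : ℝ × ℝ => p.1 + p.2) ⁻¹' s)) = (fun y => x + y) ⁻¹' s := rfl
    rw [this, ← Measure.map_apply (measurable_const_add x) hs, gaussianReal_map_const_add x,
      zero_add, gaussianReal_apply x hw s]
  calc (gaussianReal 0 v).conv (gaussianReal 0 w) s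
      = ∫⁻ x, gaussianReal 0 w (Prod.mk x ⁻¹' ((fun p : ℝ × ℝ => p.1 + p.2) ⁻¹' s))
          ∂(gaussianReal 0 v) := by
        rw [Measure.conv, Measure.map_apply measurable_add hs,
          Measure.prod_apply (measurable_add hs)]
    _ = ∫⁻ x, (∫⁻ y in s, gaussianPDF x w y) ∂(gaussianReal 0 v) := lintegral_congr hmapx
    _ = ∫⁻ x, (gaussianPDF 0 v * fun x => ∫⁻ y in s, gaussianPDF x w y) x := by
        rw [gaussianReal_of_var_ne_zero 0 hv]
        exact lintegral_withDensity_eq_lintegral_mul volume (measurable_gaussianPDF 0 v) hg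
    _ = ∫⁻ x, ∫⁻ y in s, gaussianPDF 0 v x * gaussianPDF x w y := by
        congr 1
        funext x
        simp only [Pi.mul_apply]
        rw [← lintegral_const_mul _ (measurable_gaussianPDF x w)]
    _ = ∫⁻ y in s, ∫⁻ x, gaussianPDF 0 v x * gaussianPDF x w y := by
        exact lintegral_lintegral_swap hmeas_unc
    _ = ∫⁻ y in s, gaussianPDF 0 (v+w) y := by exact lintegral_congr fun y => hinner y
    _ = gaussianReal 0 (v+w) s := (gaussianReal_apply 0 hvw s).symm

lemma indepFun_map_add_conv {Ω : Type*} [MeasurableSpace Ω] {P : Measure Ω}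
    [IsProbabilityMeasure P] {X Y : Ω → ℝ} (h : IndepFun X Y P)
    (hX : Measurable X) (hY : Measurable Y) :
    P.map (fun ω => X ω + Y ω) = (P.map X).conv (P.map Y) := by
  rw [Measure.conv,
    ← (indepFun_iff_map_prod_eq_prod_map_map hX.aemeasurable hY.aemeasurable).mp h,
    Measure.map_map measurable_add (hX.prodMk hY)]
  rfl

lemma law_gaussian_sum {Ω : Type*} [MeasurableSpace Ω] (P : Measure Ω)
    [IsProbabilityMeasure P] (g : ℕ → Ω → ℝ) (hg_meas : ∀ n, Measurable (g n))
    (hg_indep : iIndepFun g P)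
    (hg_law : ∀ n, Measure.map (g n) P = gaussianReal 0 1) (c : ℕ → ℝ) (N : ℕ) :
    P.map (fun ω => ∑ n ∈ Finset.range N, c n * g n ω)
      = gaussianReal 0 (∑ n ∈ Finset.range N, NNReal.mk ((c n)^2) (sq_nonneg _)) := by
  induction N with
  | zero =>
    simp only [Finset.range_zero, Finset.sum_empty]
    rw [Measure.map_const, gaussianReal_zero_var]
    simp
  | succ N ih =>
    have hmeas : ∀ n, Measurable (fun ω => c n * g n ω) :=
      fun n => (hg_meas n).const_mul (c n)
    have h1 : iIndepFun (fun n ω => c n * g n ω) P :=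
      hg_indep.comp (fun n x => c n * x) (fun n => measurable_const_mul _)
    have hind : IndepFun (fun ω => ∑ n ∈ Finset.range N, c n * g n ω)
        (fun ω => c N * g N ω) P := by
      have key := h1.indepFun_finsetSum_of_notMem hmeas
        (Finset.notMem_range_self (n := N))
      have he : (∑ j ∈ Finset.range N, fun ω => c j * g j ω)
          = fun ω => ∑ j ∈ Finset.range N, c j * g j ω := by
        funext ω
        simp [Finset.sum_apply]
      rwa [he] at key
    have hsummeas : Measurable (fun ω => ∑ n ∈ Finset.range N, c n * g n ω) := by
      exact Finset.measurable_sum _ (fun n _ => hmeas n)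
    have hlawN : P.map (fun ω => c N * g N ω) = gaussianReal 0 (NNReal.mk ((c N)^2) (sq_nonneg _)) := by
      have he : (fun ω => c N * g N ω) = (fun x => c N * x) ∘ g N := rfl
      rw [he, ← Measure.map_map (measurable_const_mul _) (hg_meas N), hg_law N,
        gaussianReal_map_const_mul (c N)]
      simp
    have hstep : (fun ω => ∑ n ∈ Finset.range (N+1), c n * g n ω)
        = fun ω => (∑ n ∈ Finset.range N, c n * g n ω) + c N * g N ω := by
      funext ω
      rw [Finset.sum_range_succ]
    rw [hstep, indepFun_map_add_conv hind hsummeas (hmeas N), ih, hlawN,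
      _root_.gaussianReal_conv_gaussianReal, Finset.sum_range_succ]

lemma gaussianReal_scale_integral {φ : ℝ → ℝ} (hφ : Continuous φ) (u : NNReal) :
    ∫ x, φ x ∂(gaussianReal 0 u) = ∫ x, φ (Real.sqrt u * x) ∂(gaussianReal 0 1) := by
  have hmap : (gaussianReal 0 1).map (fun x => Real.sqrt u * x) = gaussianReal 0 u := by
    rw [show (fun x : ℝ => Real.sqrt u * x) = (fun x : ℝ => Real.sqrt u * x) from rfl,
      gaussianReal_map_const_mul (Real.sqrt u)]
    congr 1
    · simp
    · ext
      simp [Real.sq_sqrt u.coe_nonneg]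
  rw [← hmap, integral_map (by fun_prop) hφ.aestronglyMeasurable]

lemma white_noise_law {Ω : Type*} [MeasurableSpace Ω] (P : Measure Ω) [IsProbabilityMeasure P]
    (g : ℕ → Ω → ℝ) (hg_meas : ∀ n, Measurable (g n))
    (hg_indep : iIndepFun g P)
    (hg_law : ∀ n, Measure.map (g n) P = gaussianReal 0 1)
    (c : ℕ → ℝ) (X : Ω → ℝ) (hX : AEStronglyMeasurable X P)
    (hconv : Tendsto (fun N => eLpNorm
        (fun ω => (∑ n ∈ Finset.range N, c n * g n ω) - X ω) 2 P) atTop (nhds 0))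
    (v : NNReal)
    (hv : Tendsto (fun N => ∑ n ∈ Finset.range N, (c n)^2) atTop (nhds (v:ℝ))) :
    P.map X = gaussianReal 0 v := by
  set S : ℕ → Ω → ℝ := fun N ω => ∑ n ∈ Finset.range N, c n * g n ω with hS
  have hSmeas : ∀ N, Measurable (S N) :=
    fun N => Finset.measurable_sum _ (fun n _ => (hg_meas n).const_mul _)
  have htim : TendstoInMeasure P S atTop X := by
    refine tendstoInMeasure_of_tendsto_eLpNorm two_ne_zero
      (fun N => (hSmeas N).aestronglyMeasurable) hX ?_
    exact hconv
  obtain ⟨ns, hns, hae⟩ := htim.exists_seq_tendsto_ae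
  set vN : ℕ → NNReal := fun N => ∑ n ∈ Finset.range N, NNReal.mk ((c n)^2) (sq_nonneg _) with hvN
  have hvNcoe : ∀ N, ((vN N : ℝ)) = ∑ n ∈ Finset.range N, (c n)^2 := by
    intro N
    simp [hvN, NNReal.coe_sum]
  have hcoe_t : Tendsto (fun N => ((vN N : ℝ))) atTop (nhds (v:ℝ)) := by
    rw [show (fun N => ((vN N : ℝ))) = fun N => ∑ n ∈ Finset.range N, (c n)^2 from
      funext hvNcoe]
    exact hv
  have hsqrt : Tendsto (fun N => Real.sqrt (vN N)) atTop (nhds (Real.sqrt v)) :=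
    (Real.continuous_sqrt.tendsto _).comp hcoe_t
  haveI : IsProbabilityMeasure (P.map X) := Measure.isProbabilityMeasure_map hX.aemeasurable
  apply ext_of_forall_lintegral_eq_of_IsFiniteMeasure
  intro φ
  set φr : ℝ → ℝ := fun x => (φ x : ℝ) with hφr
  have hφrc : Continuous φr := NNReal.continuous_coe.comp φ.continuous
  have hφbd : ∀ x, ‖φr x‖ ≤ (nndist φ 0 : ℝ) := by
    intro x
    rw [hφr, Real.norm_eq_abs, abs_of_nonneg (φ x).coe_nonneg]
    exact_mod_cast BoundedContinuousFunction.NNReal.upper_bound φ x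
  have key : ∫ x, φr x ∂(P.map X) = ∫ x, φr x ∂(gaussianReal 0 v) := by
    have h1 : ∫ x, φr x ∂(P.map X) = ∫ ω, φr (X ω) ∂P :=
      integral_map hX.aemeasurable hφrc.aestronglyMeasurable
    have h2 : Tendsto (fun k => ∫ ω, φr (S (ns k) ω) ∂P) atTop
        (nhds (∫ ω, φr (X ω) ∂P)) := by
      refine tendsto_integral_of_dominated_convergence (fun _ => (nndist φ 0 : ℝ))
        (fun k => hφrc.comp_aestronglyMeasurable (hSmeas (ns k)).aestronglyMeasurable)
        (integrable_const _) (fun k => ae_of_all _ (fun ω => hφbd _)) ?_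
      filter_upwards [hae] with ω hω using (hφrc.tendsto _).comp hω
    have h3 : ∀ N, ∫ ω, φr (S N ω) ∂P
        = ∫ x, φr (Real.sqrt (vN N) * x) ∂(gaussianReal 0 1) := by
      intro N
      rw [← integral_map (hSmeas N).aemeasurable hφrc.aestronglyMeasurable,
        law_gaussian_sum P g hg_meas hg_indep hg_law c N]
      exact gaussianReal_scale_integral hφrc (vN N)
    have h4 : Tendsto (fun k => ∫ x, φr (Real.sqrt (vN (ns k)) * x) ∂(gaussianReal 0 1))
        atTop (nhds (∫ x, φr (Real.sqrt v * x) ∂(gaussianReal 0 1))) := by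
      refine tendsto_integral_of_dominated_convergence (fun _ => (nndist φ 0 : ℝ))
        (fun k => (hφrc.comp (continuous_const.mul continuous_id)).aestronglyMeasurable)
        (integrable_const _) (fun k => ae_of_all _ (fun x => hφbd _)) ?_
      refine ae_of_all _ (fun x => ?_)
      exact (hφrc.tendsto _).comp ((hsqrt.comp hns.tendsto_atTop).mul_const x)
    rw [funext (fun k => h3 (ns k))] at h2
    rw [h1, tendsto_nhds_unique h2 h4, ← gaussianReal_scale_integral hφrc v]
  refine (ENNReal.toReal_eq_toReal_iff'
    (φ.lintegral_lt_top_of_nnreal _).ne (φ.lintegral_lt_top_of_nnreal _).ne).mp ?_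
  rw [φ.toReal_lintegral_coe_eq_integral, φ.toReal_lintegral_coe_eq_integral]
  exact key

open scoped InnerProductSpace in
/-- `ν f` is a centered Gaussian with variance `‖f‖²`; in particular
`ν (1_A)` is a centered Gaussian with variance `μ A`. -/
theorem white_noise_is_gaussian
    {E : Type*} [MeasurableSpace E] (μ : Measure E) [IsFiniteMeasure μ]
    {Ω : Type*} [MeasurableSpace Ω] (P : Measure Ω) [IsProbabilityMeasure P]
    (ξ : HilbertBasis ℕ ℝ (Lp ℝ 2 μ))
    (g : ℕ → Ω → ℝ) (hg_meas : ∀ n, Measurable (g n))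
    (hg_indep : iIndepFun g P)
    (hg_law : ∀ n, Measure.map (g n) P = gaussianReal 0 1)
    (ν : Lp ℝ 2 μ → Ω → ℝ)
    (hν : ∀ f : Lp ℝ 2 μ, MemLp (ν f) 2 P ∧
      Tendsto
        (fun N => eLpNorm
          (fun ω => (∑ n ∈ Finset.range N, (inner ℝ f (ξ n) : ℝ) * g n ω) - ν f ω) 2 P)
        atTop (nhds 0))
    (f : Lp ℝ 2 μ) :
    Measure.map (ν f) P = gaussianReal 0 (‖f‖₊ ^ 2) ∧
    ∀ A : Set E, ∀ hA : MeasurableSet A,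
      Measure.map (ν (indicatorConstLp 2 hA (measure_ne_top μ A) (1 : ℝ))) P
        = gaussianReal 0 (μ A).toNNReal := by
  have main : ∀ f : Lp ℝ 2 μ, Measure.map (ν f) P = gaussianReal 0 (‖f‖₊ ^ 2) := by
    intro f
    refine white_noise_law P g hg_meas hg_indep hg_law (fun n => (inner ℝ f (ξ n) : ℝ)) (ν f)
      (hν f).1.aestronglyMeasurable (hν f).2 (‖f‖₊ ^ 2) ?_
    have hsum := (ξ.hasSum_inner_mul_inner f f).tendsto_sum_nat
    have hc : ∀ n : ℕ, (inner ℝ f (ξ n) : ℝ) * (inner ℝ (ξ n) f : ℝ) = (inner ℝ f (ξ n) : ℝ) ^ 2 := by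
      intro n
      rw [real_inner_comm (ξ n) f]
      ring
    simp_rw [hc] at hsum
    have hval : ((‖f‖₊ ^ 2 : NNReal) : ℝ) = (inner ℝ f f : ℝ) := by
      push_cast
      exact (real_inner_self_eq_norm_sq f).symm
    rw [hval]
    exact hsum
  refine ⟨main f, fun A hA => ?_⟩
  rw [main (indicatorConstLp 2 hA (measure_ne_top μ A) (1 : ℝ))]
  congr 1
  have hn : ‖indicatorConstLp 2 hA (measure_ne_top μ A) (1 : ℝ)‖
      = Real.sqrt ((μ A).toReal) := by
    rw [norm_indicatorConstLp two_ne_zero ENNReal.ofNat_ne_top]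
    simp only [norm_one, one_mul, ENNReal.toReal_ofNat, measureReal_def]
    rw [Real.sqrt_eq_rpow]
  ext
  push_cast
  rw [hn, Real.sq_sqrt ENNReal.toReal_nonneg]
end
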